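/- Let M ∈ ℝ^{p×p} be symmetric positive definite with block partition M = [[E₁₁, E₁₂], [E₂₁, E₂₂]] where E₁₁ is k × k (0 ≤ k < p), and let P = diag(0,…,0, 1,…,1) be the diagonal matrix with k zeros followed by p − k ones. Then, as K → ∞, (M + K·P)⁻¹ converges to the block matrix [[E₁₁⁻¹, 0], [0, 0]]. -/

import Mathlib

open Matrix Filter

lemma posDef_toBlocks₁₁_aux {k m : ℕ}
    {M : Matrix (Fin k ⊕ Fin m) (Fin k ⊕ Fin m) ℝ} (hM : M.PosDef) :
    M.toBlocks₁₁.PosDef := by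
  rw [posDef_iff_dotProduct_mulVec]
  constructor
  · ext i j
    have := congrFun (congrFun hM.1 (Sum.inl i)) (Sum.inl j)
    simpa [Matrix.toBlocks₁₁, Matrix.conjTranspose_apply] using this
  · intro x hx
    have hy : (Sum.elim x 0 : Fin k ⊕ Fin m → ℝ) ≠ 0 := by
      intro h
      apply hx
      ext i
      exact congrFun h (Sum.inl i)
    have h := hM.dotProduct_mulVec_pos hy
    have heq : dotProduct (star (Sum.elim x 0)) (M *ᵥ (Sum.elim x 0 : Fin k ⊕ Fin m → ℝ))
        = dotProduct (star x) (M.toBlocks₁₁ *ᵥ x) := by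
      simp [dotProduct, mulVec, Matrix.toBlocks₁₁, Fintype.sum_sum_type]
    rw [← heq]
    exact h

/-- key matrix limit for the lasso as a limit of smoothly penalized
M-estimators. For a symmetric positive definite matrix `M` with block partition
`[[E₁₁, E₁₂], [E₂₁, E₂₂]]` (top-left block of size `k`) and `P` the diagonal matrix
with `k` zeros followed by `p - k` ones, `(M + K·P)⁻¹` converges, as `K → ∞`, to the
block matrix `[[E₁₁⁻¹, 0], [0, 0]]`. -/
theorem inverse_limit_penalized_block_matrix
    {k m : ℕ} (hm : 0 < m)
    (M : Matrix (Fin k ⊕ Fin m) (Fin k ⊕ Fin m) ℝ) (hM : M.PosDef) :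
    Tendsto
      (fun K : ℝ =>
        (M + K • Matrix.diagonal (Sum.elim (0 : Fin k → ℝ) (1 : Fin m → ℝ)))⁻¹)
      atTop
      (nhds (Matrix.fromBlocks (M.toBlocks₁₁)⁻¹ 0 0 0)) := by
  set A := M.toBlocks₁₁ with hAdef
  set B := M.toBlocks₁₂
  set C := M.toBlocks₂₁
  set D := M.toBlocks₂₂
  have hA : A.PosDef := posDef_toBlocks₁₁_aux hM
  have hdetA : A.det ≠ 0 := hA.det_pos.ne'
  set Q : Matrix (Fin k ⊕ Fin m) (Fin k ⊕ Fin m) ℝ := fromBlocks A B 0 1 with hQdef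
  have hdetQ : Q.det ≠ 0 := by
    rw [hQdef, det_fromBlocks_zero₂₁]
    simpa using hdetA
  have hQinv : Q⁻¹ = fromBlocks A⁻¹ (-(A⁻¹ * B)) 0 1 := by
    apply inv_eq_right_inv
    rw [hQdef, fromBlocks_multiply]
    have hAA : A * A⁻¹ = 1 := Matrix.mul_nonsing_inv _ (isUnit_iff_ne_zero.mpr hdetA)
    simp [Matrix.mul_neg, ← Matrix.mul_assoc, hAA, fromBlocks_one]
  -- the rescaling matrices
  set F : ℝ → Matrix (Fin k ⊕ Fin m) (Fin k ⊕ Fin m) ℝ :=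
    fun K => fromBlocks 1 0 0 (K⁻¹ • 1) with hFdef
  set G : ℝ → Matrix (Fin k ⊕ Fin m) (Fin k ⊕ Fin m) ℝ :=
    fun K => Q + K⁻¹ • fromBlocks 0 0 C D with hGdef
  have hMblocks : M = fromBlocks A B C D := (fromBlocks_toBlocks M).symm
  have hdiag : Matrix.diagonal (Sum.elim (0 : Fin k → ℝ) (1 : Fin m → ℝ))
      = fromBlocks (0 : Matrix (Fin k) (Fin k) ℝ) 0 0 (1 : Matrix (Fin m) (Fin m) ℝ) := by
    ext (i | i) (j | j) <;>
      simp [Matrix.diagonal_apply, Matrix.fromBlocks, Matrix.one_apply, Sum.inl.injEq,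
        Sum.inr.injEq]
  -- eventual identity
  have hev : ∀ᶠ K : ℝ in atTop,
      (M + K • Matrix.diagonal (Sum.elim (0 : Fin k → ℝ) (1 : Fin m → ℝ)))⁻¹
        = (G K)⁻¹ * F K := by
    filter_upwards [eventually_gt_atTop (0 : ℝ)] with K hK
    have hKne : K ≠ 0 := hK.ne'
    have hFG : F K * (M + K • Matrix.diagonal (Sum.elim (0 : Fin k → ℝ) (1 : Fin m → ℝ)))
        = G K := by
      rw [hMblocks, hdiag, hFdef, hGdef, hQdef]
      simp only [fromBlocks_smul, fromBlocks_add, fromBlocks_multiply, smul_zero,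
        add_zero, zero_add, Matrix.one_mul, Matrix.mul_zero, Matrix.zero_mul,
        Matrix.mul_one, Matrix.smul_mul, smul_add, smul_smul,
        inv_mul_cancel₀ hKne, one_smul, add_comm]
    have hdetF : (F K).det ≠ 0 := by
      rw [hFdef]
      simp only [det_fromBlocks_zero₂₁, det_one, one_mul, det_smul, det_one, mul_one]
      positivity
    have hFinv : (F K)⁻¹ * F K = 1 := Matrix.nonsing_inv_mul _ (isUnit_iff_ne_zero.mpr hdetF)
    calc (M + K • Matrix.diagonal (Sum.elim (0 : Fin k → ℝ) (1 : Fin m → ℝ)))⁻¹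
        = (M + K • Matrix.diagonal (Sum.elim (0 : Fin k → ℝ) (1 : Fin m → ℝ)))⁻¹
            * ((F K)⁻¹ * F K) := by rw [hFinv, Matrix.mul_one]
      _ = (F K * (M + K • Matrix.diagonal (Sum.elim (0 : Fin k → ℝ) (1 : Fin m → ℝ))))⁻¹
            * F K := by rw [Matrix.mul_inv_rev, Matrix.mul_assoc]
      _ = (G K)⁻¹ * F K := by rw [hFG]
  -- convergence of G to Q
  have hinv0 : Tendsto (fun K : ℝ => K⁻¹) atTop (nhds 0) := tendsto_inv_atTop_zero
  have hG : Tendsto G atTop (nhds Q) := by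
    have : Tendsto G atTop (nhds (Q + (0 : ℝ) • fromBlocks 0 0 C D)) :=
      tendsto_const_nhds.add (hinv0.smul tendsto_const_nhds)
    simpa using this
  -- convergence of inverses
  have hGinv : Tendsto (fun K => (G K)⁻¹) atTop (nhds Q⁻¹) := by
    have hcont : ContinuousAt Inv.inv Q := by
      apply continuousAt_matrix_inv
      rw [Ring.inverse_eq_inv']
      exact continuousAt_inv₀ hdetQ
    exact hcont.tendsto.comp hG
  -- convergence of F
  have hF : Tendsto F atTop (nhds (fromBlocks 1 0 0 0)) := by
    have hFsplit : F = fun K : ℝ =>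
        fromBlocks (1 : Matrix (Fin k) (Fin k) ℝ) 0 0 0 + K⁻¹ • fromBlocks 0 0 0 (1 : Matrix (Fin m) (Fin m) ℝ) := by
      funext K
      rw [hFdef]
      simp only [fromBlocks_smul, fromBlocks_add, smul_zero, add_zero, zero_add]
    rw [hFsplit]
    have : Tendsto (fun K : ℝ =>
        fromBlocks (1 : Matrix (Fin k) (Fin k) ℝ) 0 0 0 + K⁻¹ • fromBlocks 0 0 0 (1 : Matrix (Fin m) (Fin m) ℝ))
        atTop (nhds (fromBlocks (1 : Matrix (Fin k) (Fin k) ℝ) 0 0 0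
          + (0 : ℝ) • fromBlocks 0 0 0 (1 : Matrix (Fin m) (Fin m) ℝ))) :=
      tendsto_const_nhds.add (hinv0.smul tendsto_const_nhds)
    simpa using this
  -- combine
  have hlim : Tendsto (fun K => (G K)⁻¹ * F K) atTop (nhds (Q⁻¹ * fromBlocks 1 0 0 0)) :=
    hGinv.mul hF
  have hfinal : Q⁻¹ * fromBlocks 1 0 0 0 = fromBlocks A⁻¹ 0 0 0 := by
    rw [hQinv, fromBlocks_multiply]
    simp
  rw [hfinal] at hlim
  apply Tendsto.congr' _ hlim
  filter_upwards [hev] with K h using h.symm
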